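/- arXiv:2409.00827 — 2 statements merged into one kernel-verified Lean document; each statement's English description precedes it below -/
import Mathlib

section
/- Let G be a finite W_p graph (p a positive integer). If every connected component of G has independence number greater than 1, then the minimum degree of G satisfies δ(G) ≥ p. -/
namespace WpGraphs

variable {V : Type*}

/-- `S` is an independent set of `G`: its vertices are pairwise non-adjacent. -/
def IsIndepSet (G : SimpleGraph V) (S : Set V) : Prop :=
  S.Pairwise fun u v => ¬ G.Adj u v

/-- The independence number `α(G)`: the cardinality of a largest independent set. -/
noncomputable def indepNum (G : SimpleGraph V) : ℕ :=
  sSup {n : ℕ | ∃ S : Set V, IsIndepSet G S ∧ S.ncard = n}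

/-- A maximum independent set: an independent set of cardinality `α(G)`. -/
def IsMaxIndepSet (G : SimpleGraph V) (S : Set V) : Prop :=
  IsIndepSet G S ∧ S.ncard = indepNum G

/-- A maximal independent set: an independent set that cannot be extended. -/
def IsMaximalIndepSet (G : SimpleGraph V) (S : Set V) : Prop :=
  IsIndepSet G S ∧ ∀ T : Set V, IsIndepSet G T → S ⊆ T → S = T

/-- `G` is a `W_p` graph: `n(G) ≥ p` and every `p` pairwise disjoint independent sets
are contained in `p` pairwise disjoint maximum independent sets. -/
def IsWp (G : SimpleGraph V) (p : ℕ) : Prop :=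
  p ≤ Nat.card V ∧
    ∀ A : Fin p → Set V, (∀ i, IsIndepSet G (A i)) →
      (Pairwise fun i j => Disjoint (A i) (A j)) →
      ∃ S : Fin p → Set V, (∀ i, IsMaxIndepSet G (S i)) ∧
        (Pairwise fun i j => Disjoint (S i) (S j)) ∧ ∀ i, A i ⊆ S i

/-- The neighborhood `N_G(S)` of a set of vertices `S`. -/
def setNbhd (G : SimpleGraph V) (S : Set V) : Set V :=
  {v | v ∉ S ∧ ∃ u ∈ S, G.Adj u v}

/-- `G` is `λ`-quasi-regularizable: `λ·|S| ≤ |N_G(S)|` for every independent set `S`. -/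
def QuasiReg (G : SimpleGraph V) (lam : ℝ) : Prop :=
  ∀ S : Set V, IsIndepSet G S → lam * S.ncard ≤ ((setNbhd G S).ncard : ℝ)

/-- `s_k(G)`: the number of independent sets of cardinality `k` in `G`
(the `k`-th coefficient of the independence polynomial). -/
noncomputable def indepCount (G : SimpleGraph V) (k : ℕ) : ℕ :=
  {S : Set V | IsIndepSet G S ∧ S.ncard = k}.ncard

/-- The independence polynomial of `G` is log-concave:
`s_k² ≥ s_{k-1}·s_{k+1}` for all `1 ≤ k ≤ α(G) - 1`. -/
def IndepLogConcave (G : SimpleGraph V) : Prop :=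
  ∀ k : ℕ, 1 ≤ k → k + 1 ≤ indepNum G →
    indepCount G (k - 1) * indepCount G (k + 1) ≤ indepCount G k ^ 2

/-- The vertex set of the localization `G_A = G − N_G[A]`:
all vertices outside `A` having no neighbor in `A`. -/
def locSet (G : SimpleGraph V) (A : Set V) : Set V :=
  {v | v ∉ A ∧ ∀ u ∈ A, ¬ G.Adj u v}

/-- `G` is well-covered: all maximal independent sets have the same size. -/
def IsWellCovered (G : SimpleGraph V) : Prop :=
  ∀ S T : Set V, IsMaximalIndepSet G S → IsMaximalIndepSet G T → S.ncard = T.ncard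

/-- `G` is very well-covered: well-covered, no isolated vertices, and `n(G) = 2·α(G)`. -/
def IsVeryWellCovered (G : SimpleGraph V) : Prop :=
  IsWellCovered G ∧ (∀ v : V, ∃ w : V, G.Adj v w) ∧ Nat.card V = 2 * indepNum G

/-- The clique corona `G∘𝓗` where `𝓗 = {K_{p v} : v ∈ V(G)}`: each vertex `v` of `G`
is joined to all vertices of its own copy of the complete graph `K_{p v}`. -/
def cliqueCorona (G : SimpleGraph V) (p : V → ℕ) :
    SimpleGraph (V ⊕ Σ v : V, Fin (p v)) :=
  SimpleGraph.fromRel fun a b =>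
    match a, b with
    | .inl u, .inl v => G.Adj u v
    | .inl u, .inr ⟨v, _⟩ => u = v
    | .inr ⟨u, _⟩, .inr ⟨v, _⟩ => u = v
    | .inr _, .inl _ => False

lemma ncard_le_indepNum [Finite V] (G : SimpleGraph V) {S : Set V} (hS : IsIndepSet G S) :
    S.ncard ≤ indepNum G := by
  apply le_csSup
  · refine ⟨Nat.card V, ?_⟩
    rintro n ⟨T, -, rfl⟩
    calc T.ncard ≤ (Set.univ : Set V).ncard :=
          Set.ncard_le_ncard (Set.subset_univ T) Set.finite_univ
      _ = Nat.card V := Set.ncard_univ V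
  · exact ⟨S, hS, rfl⟩

lemma max_dominates [Finite V] (G : SimpleGraph V) {S : Set V} {v : V}
    (hS : IsMaxIndepSet G S) (hv : v ∉ S) : ∃ w ∈ S, G.Adj v w := by
  by_contra hno
  push_neg at hno
  have hins : IsIndepSet G (insert v S) := by
    intro a ha b hb hab
    rcases Set.mem_insert_iff.mp ha with rfl | ha
    · rcases Set.mem_insert_iff.mp hb with rfl | hb
      · exact absurd rfl hab
      · exact hno b hb
    · rcases Set.mem_insert_iff.mp hb with hb | hb
      · exact fun h => hno a ha (G.adj_symm (hb ▸ h))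
      · exact hS.1 ha hb hab
  have h1 : (insert v S).ncard = S.ncard + 1 :=
    Set.ncard_insert_of_notMem hv (Set.toFinite S)
  have h2 := ncard_le_indepNum G hins
  have h3 := hS.2
  omega

lemma core [Finite V] {G : SimpleGraph V} {p : ℕ} (hWp : IsWp G p) (hp : 0 < p)
    {v : V} (A : Fin p → Set V) (j₀ : Fin p) (hj : j₀.val ≠ 0)
    (hind : ∀ i, IsIndepSet G (A i))
    (hdisj : Pairwise fun i j => Disjoint (A i) (A j))
    (hv : v ∈ A ⟨0, hp⟩)
    (hblock : ∀ w, G.Adj v w → (∃ i, i ≠ j₀ ∧ w ∈ A i) ∨ (∃ x ∈ A j₀, G.Adj w x)) :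
    False := by
  obtain ⟨S, hSmax, hSdisj, hsub⟩ := hWp.2 A hind hdisj
  have h0j : (⟨0, hp⟩ : Fin p) ≠ j₀ := fun h => hj (by rw [← h])
  have hvnot : v ∉ S j₀ := fun h =>
    (Set.disjoint_left.mp (hSdisj h0j) (hsub _ hv)) h
  obtain ⟨w, hwS, hadj⟩ := max_dominates G (hSmax j₀) hvnot
  rcases hblock w hadj with ⟨i, hij, hwA⟩ | ⟨x, hxA, hwx⟩
  · exact (Set.disjoint_left.mp (hSdisj hij) (hsub i hwA)) hwS
  · exact (hSmax j₀).1 hwS (hsub j₀ hxA) hwx.ne hwx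

lemma walk_mem {G : SimpleGraph V} {C : Set V}
    (hC : ∀ a ∈ C, ∀ b, G.Adj a b → b ∈ C) :
    ∀ {v w : V}, G.Walk v w → v ∈ C → w ∈ C := by
  intro v w q
  induction q with
  | nil => exact id
  | cons h q ih => exact fun hv => ih (hC _ hv _ h)

lemma exists_max_indep {W : Type*} [Finite W] (H : SimpleGraph W) :
    ∃ S : Set W, IsIndepSet H S ∧ S.ncard = indepNum H := by
  have hne : {n : ℕ | ∃ S : Set W, IsIndepSet H S ∧ S.ncard = n}.Nonempty :=
    ⟨0, ∅, Set.pairwise_empty _, Set.ncard_empty W⟩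
  have hbdd : BddAbove {n : ℕ | ∃ S : Set W, IsIndepSet H S ∧ S.ncard = n} := by
    refine ⟨Nat.card W, ?_⟩
    rintro n ⟨S, -, rfl⟩
    calc S.ncard ≤ (Set.univ : Set W).ncard :=
          Set.ncard_le_ncard (Set.subset_univ S) Set.finite_univ
      _ = Nat.card W := Set.ncard_univ W
  exact Nat.sSup_mem hne hbdd


/-- If every connected component of a finite `W_p` graph `G` has
independence number greater than `1`, then `δ(G) ≥ p`. -/
theorem wp_minDegree {V : Type*} [Finite V] (G : SimpleGraph V) (p : ℕ)
    (hp : 0 < p) (hWp : IsWp G p)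
    (hcomp : ∀ c : G.ConnectedComponent, 1 < indepNum (G.induce c.supp)) :
    ∀ v : V, p ≤ (G.neighborSet v).ncard := by
  intro v
  by_contra hlt
  push_neg at hlt
  have hvnotN : v ∉ G.neighborSet v := fun h => G.loopless.irrefl v h
  by_cases hC : ∃ w ∈ G.neighborSet v, ∃ x, G.Adj w x ∧ x ∉ G.neighborSet v ∧ x ≠ v
  · -- Case C : a neighbor w1 of v has a neighbor x outside N[v]
    obtain ⟨w1, hw1, x, hwx, hxN, hxv⟩ := hC
    have hd1 : 1 ≤ (G.neighborSet v).ncard := by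
      rw [Nat.one_le_iff_ne_zero]
      intro h
      rw [Set.ncard_eq_zero (Set.toFinite _)] at h
      rw [h] at hw1
      exact hw1
    have hp2' : 1 < p := by omega
    set W : Set V := G.neighborSet v \ {w1} with hWdef
    have hWcard : W.ncard + 2 ≤ p := by
      have h := Set.ncard_diff_singleton_of_mem hw1
      rw [hWdef]
      omega
    have e : ↥W ≃ Fin W.ncard := Finite.equivFinOfCardEq (Nat.card_coe_set_eq W)
    set A : Fin p → Set V := fun i =>
      if i.val = 0 then {v}
      else if i.val = 1 then {x}
      else {u | ∃ h : u ∈ W, ((e ⟨u, h⟩ : Fin W.ncard) : ℕ) + 2 = i.val} with hA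
    set j₀ : Fin p := ⟨1, hp2'⟩ with hj₀
    have hj₀v : j₀.val = 1 := rfl
    have hmem : ∀ (i : Fin p) (u : V), u ∈ A i →
        (i.val = 0 ∧ u = v) ∨ (i.val = 1 ∧ u = x) ∨
        (∃ h : u ∈ W, ((e ⟨u, h⟩ : Fin W.ncard) : ℕ) + 2 = i.val) := by
      intro i u hu
      by_cases h0 : i.val = 0
      · exact Or.inl ⟨h0, by simpa [hA, h0] using hu⟩
      by_cases h1 : i.val = 1
      · exact Or.inr (Or.inl ⟨h1, by simpa [hA, h0, h1] using hu⟩)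
      exact Or.inr (Or.inr (by simpa [hA, h0, h1] using hu))
    have hv0 : ∀ i : Fin p, i.val = 0 → v ∈ A i := by
      intro i hi
      simp only [hA]
      rw [if_pos hi]
      rfl
    have hxmem : ∀ i : Fin p, i.val = 1 → x ∈ A i := by
      intro i hi
      have h0 : ¬ i.val = 0 := by omega
      simp only [hA]
      rw [if_neg h0, if_pos hi]
      rfl
    have hfib : ∀ (i : Fin p) (u : V) (h : u ∈ W),
        ((e ⟨u, h⟩ : Fin W.ncard) : ℕ) + 2 = i.val → u ∈ A i := by
      intro i u h hi
      have h0 : ¬ i.val = 0 := by omega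
      have h1 : ¬ i.val = 1 := by omega
      simp only [hA]
      rw [if_neg h0, if_neg h1]
      exact ⟨h, hi⟩
    have hind : ∀ i, IsIndepSet G (A i) := by
      intro i u hu u' hu' hne hadj
      rcases hmem i u hu with ⟨h0, rfl⟩ | ⟨h1, rfl⟩ | ⟨hw, hh⟩ <;>
        rcases hmem i u' hu' with ⟨h0', rfl⟩ | ⟨h1', rfl⟩ | ⟨hw', hh'⟩
      · exact hne rfl
      · omega
      · omega
      · omega
      · exact hne rfl
      · omega
      · omega
      · omega
      · have hval : ((e ⟨u, hw⟩ : Fin W.ncard) : ℕ) = ((e ⟨u', hw'⟩ : Fin W.ncard) : ℕ) := by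
          omega
        have := e.injective (Fin.val_injective hval)
        exact hne (congrArg Subtype.val this)
    have hdisj : Pairwise fun i j => Disjoint (A i) (A j) := by
      intro i j hij
      rw [Set.disjoint_left]
      intro u hui huj
      apply hij
      apply Fin.ext
      rcases hmem i u hui with ⟨h0, rfl⟩ | ⟨h1, rfl⟩ | ⟨hw, hh⟩ <;>
        rcases hmem j u huj with ⟨h0', hu2⟩ | ⟨h1', hu2⟩ | ⟨hw2, hh2⟩
      · omega
      · exact absurd hu2.symm hxv
      · exact absurd hw2.1 hvnotN
      · exact absurd hu2 hxv
      · omega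
      · exact absurd hw2.1 hxN
      · exact absurd (hu2 ▸ hw).1 hvnotN
      · exact absurd (hu2 ▸ hw).1 hxN
      · have hE : e ⟨u, hw⟩ = e ⟨u, hw2⟩ := rfl
        rw [hE] at hh
        omega
    have hblock : ∀ w, G.Adj v w →
        (∃ i, i ≠ j₀ ∧ w ∈ A i) ∨ (∃ y ∈ A j₀, G.Adj w y) := by
      intro w hadj
      by_cases hww : w = w1
      · right
        exact ⟨x, hxmem j₀ hj₀v, by rw [hww]; exact hwx⟩
      · left
        have hwW : w ∈ W := ⟨hadj, hww⟩
        have hlt2 : ((e ⟨w, hwW⟩ : Fin W.ncard) : ℕ) + 2 < p := by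
          have := (e ⟨w, hwW⟩).isLt
          omega
        refine ⟨⟨((e ⟨w, hwW⟩ : Fin W.ncard) : ℕ) + 2, hlt2⟩, ?_, hfib _ w hwW rfl⟩
        intro hcontr
        have h' : ((e ⟨w, hwW⟩ : Fin W.ncard) : ℕ) + 2 = 1 := congrArg Fin.val hcontr
        omega
    exact core hWp hp A j₀ (by rw [hj₀v]; omega) hind hdisj (hv0 _ rfl) hblock
  · -- Case B : N[v] is closed under adjacency
    have hclosed : ∀ a ∈ insert v (G.neighborSet v), ∀ b, G.Adj a b →
        b ∈ insert v (G.neighborSet v) := by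
      intro a ha b hab
      rcases Set.mem_insert_iff.mp ha with rfl | ha
      · exact Set.mem_insert_of_mem _ hab
      · by_contra hb
        apply hC
        refine ⟨a, ha, b, hab, fun h => hb (Set.mem_insert_of_mem _ h),
          fun h => hb (h ▸ Set.mem_insert _ _)⟩
    have hsupp : (G.connectedComponentMk v).supp ⊆ insert v (G.neighborSet v) := by
      intro u hu
      have hr : G.Reachable v u :=
        (SimpleGraph.ConnectedComponent.eq.mp
          ((SimpleGraph.ConnectedComponent.mem_supp_iff _ _).mp hu)).symm
      obtain ⟨q⟩ := hr
      exact walk_mem hclosed q (Set.mem_insert _ _)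
    obtain ⟨S, hS, hScard⟩ := exists_max_indep (G.induce (G.connectedComponentMk v).supp)
    have h2 : 1 < S.ncard := by
      rw [hScard]
      exact hcomp _
    obtain ⟨a, b, haS, hbS, hne⟩ := (Set.one_lt_ncard_iff (Set.toFinite S)).mp h2
    have hnadj : ¬ G.Adj (a : V) (b : V) := hS haS hbS hne
    have hamem := hsupp a.2
    have hbmem := hsupp b.2
    have hne' : (a : V) ≠ (b : V) := fun h => hne (Subtype.ext h)
    have haN : (a : V) ∈ G.neighborSet v := by
      rcases Set.mem_insert_iff.mp hamem with h | h
      · exfalso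
        rcases Set.mem_insert_iff.mp hbmem with h' | h'
        · exact hne' (h.trans h'.symm)
        · exact hnadj (by rw [h]; exact h')
      · exact h
    have hbN : (b : V) ∈ G.neighborSet v := by
      rcases Set.mem_insert_iff.mp hbmem with h | h
      · exact absurd (G.adj_symm (by rw [h]; exact haN)) hnadj
      · exact h
    have hpairsub : ({(a : V), (b : V)} : Set V) ⊆ G.neighborSet v :=
      Set.insert_subset_iff.mpr ⟨haN, Set.singleton_subset_iff.mpr hbN⟩
    have hd2 : 2 ≤ (G.neighborSet v).ncard := by
      have h := Set.ncard_le_ncard hpairsub (Set.toFinite _)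
      rw [Set.ncard_pair hne'] at h
      exact h
    have hp3 : 3 ≤ p := by omega
    set W : Set V := G.neighborSet v \ {(a : V), (b : V)} with hWdef
    have hWcard : W.ncard + 3 ≤ p := by
      have h := Set.ncard_diff hpairsub (Set.toFinite _)
      rw [Set.ncard_pair hne'] at h
      rw [hWdef]
      omega
    have e : ↥W ≃ Fin W.ncard := Finite.equivFinOfCardEq (Nat.card_coe_set_eq W)
    set A : Fin p → Set V := fun i =>
      if i.val = 0 then {v}
      else if i.val = 1 then (∅ : Set V)
      else if i.val = 2 then {(a : V), (b : V)}
      else {u | ∃ h : u ∈ W, ((e ⟨u, h⟩ : Fin W.ncard) : ℕ) + 3 = i.val} with hA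
    set j₀ : Fin p := ⟨1, by omega⟩ with hj₀
    have hj₀v : j₀.val = 1 := rfl
    have hmem : ∀ (i : Fin p) (u : V), u ∈ A i →
        (i.val = 0 ∧ u = v) ∨ (i.val = 2 ∧ (u = (a : V) ∨ u = (b : V))) ∨
        (∃ h : u ∈ W, ((e ⟨u, h⟩ : Fin W.ncard) : ℕ) + 3 = i.val) := by
      intro i u hu
      by_cases h0 : i.val = 0
      · exact Or.inl ⟨h0, by simpa [hA, h0] using hu⟩
      by_cases h1 : i.val = 1
      · exact absurd (by simpa [hA, h0, h1] using hu) (fun h => h)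
      by_cases h2 : i.val = 2
      · exact Or.inr (Or.inl ⟨h2, by simpa [hA, h0, h1, h2] using hu⟩)
      exact Or.inr (Or.inr (by simpa [hA, h0, h1, h2] using hu))
    have hv0 : ∀ i : Fin p, i.val = 0 → v ∈ A i := by
      intro i hi
      simp only [hA]
      rw [if_pos hi]
      rfl
    have hpairmem : ∀ i : Fin p, i.val = 2 → ∀ u : V, u = (a : V) ∨ u = (b : V) → u ∈ A i := by
      intro i hi u hu
      have h0 : ¬ i.val = 0 := by omega
      have h1 : ¬ i.val = 1 := by omega
      simp only [hA]
      rw [if_neg h0, if_neg h1, if_pos hi]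
      rcases hu with rfl | rfl
      · exact Set.mem_insert _ _
      · exact Set.mem_insert_of_mem _ rfl
    have hfib : ∀ (i : Fin p) (u : V) (h : u ∈ W),
        ((e ⟨u, h⟩ : Fin W.ncard) : ℕ) + 3 = i.val → u ∈ A i := by
      intro i u h hi
      have h0 : ¬ i.val = 0 := by omega
      have h1 : ¬ i.val = 1 := by omega
      have h2 : ¬ i.val = 2 := by omega
      simp only [hA]
      rw [if_neg h0, if_neg h1, if_neg h2]
      exact ⟨h, hi⟩
    have hind : ∀ i, IsIndepSet G (A i) := by
      intro i u hu u' hu' hneq hadj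
      rcases hmem i u hu with ⟨h0, rfl⟩ | ⟨h2, hu1⟩ | ⟨hw, hh⟩ <;>
        rcases hmem i u' hu' with ⟨h0', rfl⟩ | ⟨h2', hu2⟩ | ⟨hw2, hh2⟩
      · exact hneq rfl
      · omega
      · omega
      · omega
      · rcases hu1 with rfl | rfl <;> rcases hu2 with rfl | rfl
        · exact hneq rfl
        · exact hnadj hadj
        · exact hnadj (G.adj_symm hadj)
        · exact hneq rfl
      · omega
      · omega
      · omega
      · have hval : ((e ⟨u, hw⟩ : Fin W.ncard) : ℕ) = ((e ⟨u', hw2⟩ : Fin W.ncard) : ℕ) := by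
          omega
        have := e.injective (Fin.val_injective hval)
        exact hneq (congrArg Subtype.val this)
    have hdisj : Pairwise fun i j => Disjoint (A i) (A j) := by
      intro i j hij
      rw [Set.disjoint_left]
      intro u hui huj
      apply hij
      apply Fin.ext
      rcases hmem i u hui with ⟨h0, rfl⟩ | ⟨h2, hu1⟩ | ⟨hw, hh⟩ <;>
        rcases hmem j u huj with ⟨h0', hu2⟩ | ⟨h2', hu2⟩ | ⟨hw2, hh2⟩
      · omega
      · rcases hu2 with h | h
        · rw [← h] at haN
          exact absurd haN hvnotN
        · rw [← h] at hbN
          exact absurd hbN hvnotN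
      · exact absurd hw2.1 hvnotN
      · rcases hu1 with h | h
        · rw [h.symm.trans hu2] at haN
          exact absurd haN hvnotN
        · rw [h.symm.trans hu2] at hbN
          exact absurd hbN hvnotN
      · omega
      · exact absurd hu1 hw2.2
      · exact absurd (hu2 ▸ hw).1 hvnotN
      · exact absurd hu2 hw.2
      · have hE : e ⟨u, hw⟩ = e ⟨u, hw2⟩ := rfl
        rw [hE] at hh
        omega
    have hblock : ∀ w, G.Adj v w →
        (∃ i, i ≠ j₀ ∧ w ∈ A i) ∨ (∃ y ∈ A j₀, G.Adj w y) := by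
      intro w hadj
      left
      by_cases hwab : w = (a : V) ∨ w = (b : V)
      · refine ⟨⟨2, by omega⟩, ?_, hpairmem _ rfl w hwab⟩
        intro hcontr
        have h' : (2 : ℕ) = 1 := congrArg Fin.val hcontr
        omega
      · have hwW : w ∈ W := ⟨hadj, hwab⟩
        have hlt3 : ((e ⟨w, hwW⟩ : Fin W.ncard) : ℕ) + 3 < p := by
          have := (e ⟨w, hwW⟩).isLt
          omega
        refine ⟨⟨((e ⟨w, hwW⟩ : Fin W.ncard) : ℕ) + 3, hlt3⟩, ?_, hfib _ w hwW rfl⟩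
        intro hcontr
        have h' : ((e ⟨w, hwW⟩ : Fin W.ncard) : ℕ) + 3 = 1 := congrArg Fin.val hcontr
        omega
    exact core hWp hp A j₀ (by rw [hj₀v]; omega) hind hdisj (hv0 _ rfl) hblock


end WpGraphs
end

section
/- Let G be a finite graph, let p(v) ≥ 1 be a positive integer for each vertex v of G, let 𝓗 = {K_{p(v)} : v ∈ V(G)}, and set p = min over v ∈ V(G) of p(v). If p ≥ n(G)²/(4(n(G)+1)), then the independence polynomial I(G∘𝓗; x) of the clique corona graph G∘𝓗 is log-concave. -/
namespace WpGraphs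

variable {V : Type*}

section Core

variable [DecidableEq V] (G : SimpleGraph V)

open Finset

open scoped Classical in
/-- The index finset of admissible pairs `(A, B)`. -/
noncomputable def prs (E R : Finset V) (j : ℕ) : Finset (Finset V × Finset V) :=
  (E.powerset ×ˢ E.powerset).filter
    (fun x => x.1 ⊆ R ∧ IsIndepSet G (x.1 : Set V) ∧ Disjoint x.1 x.2 ∧
      x.1.card + x.2.card = j)

/-- The weighted count `s_j(E, R)`. -/
noncomputable def sW (p : V → ℕ) (E R : Finset V) (j : ℕ) : ℕ :=
  ∑ x ∈ prs G E R j, ∏ v ∈ x.2, p v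

lemma mem_prs {E R : Finset V} {j : ℕ} {x : Finset V × Finset V} :
    x ∈ prs G E R j ↔ x.1 ⊆ E ∧ x.2 ⊆ E ∧ x.1 ⊆ R ∧ IsIndepSet G (x.1 : Set V) ∧
      Disjoint x.1 x.2 ∧ x.1.card + x.2.card = j := by
  classical
  simp only [prs, mem_filter, mem_product, mem_powerset]
  tauto

lemma prs_zero (E R : Finset V) : prs G E R 0 = {(∅, ∅)} := by
  ext x
  simp only [mem_prs, mem_singleton]
  constructor
  · rintro ⟨-, -, -, -, -, h6⟩
    have h1 : x.1 = ∅ := card_eq_zero.mp (by omega)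
    have h2 : x.2 = ∅ := card_eq_zero.mp (by omega)
    exact Prod.ext h1 h2
  · rintro rfl
    refine ⟨by simp, by simp, by simp, ?_, by simp, by simp⟩
    simp [IsIndepSet]

lemma sW_zero (p : V → ℕ) (E R : Finset V) : sW G p E R 0 = 1 := by
  rw [sW, prs_zero]
  simp

lemma sW_eq_zero (p : V → ℕ) {E : Finset V} (R : Finset V) {j : ℕ} (h : E.card < j) :
    sW G p E R j = 0 := by
  rw [sW]
  apply Finset.sum_eq_zero
  intro x hx
  exfalso
  rw [mem_prs] at hx
  obtain ⟨h1, h2, -, -, h5, h6⟩ := hx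
  have : (x.1 ∪ x.2).card = j := by
    rw [card_union_of_disjoint h5]; exact h6
  have : (x.1 ∪ x.2).card ≤ E.card := card_le_card (union_subset h1 h2)
  omega

lemma one_le_sW (p : V → ℕ) {E : Finset V} (R : Finset V) {j : ℕ}
    (hp : ∀ v ∈ E, 1 ≤ p v) (h : j ≤ E.card) : 1 ≤ sW G p E R j := by
  obtain ⟨B, hBE, hBcard⟩ := Finset.exists_subset_card_eq h
  have hmem : ((∅ : Finset V), B) ∈ prs G E R j := by
    rw [mem_prs]
    exact ⟨empty_subset _, hBE, empty_subset _, by simp [IsIndepSet], disjoint_empty_left _,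
      by simp [hBcard]⟩
  calc (1 : ℕ) = ∏ v ∈ B, 1 := by simp
    _ ≤ ∏ v ∈ B, p v := Finset.prod_le_prod' (fun v hv => hp v (hBE hv))
    _ ≤ _ := Finset.single_le_sum (f := fun x : Finset V × Finset V => ∏ v ∈ x.2, p v)
        (fun x _ => Nat.zero_le _) hmem

/-- Monotonicity in the allowed set `R`. -/
lemma sW_mono_R (p : V → ℕ) (E : Finset V) {R R' : Finset V} (h : R ⊆ R') (j : ℕ) :
    sW G p E R j ≤ sW G p E R' j := by
  apply Finset.sum_le_sum_of_subset
  intro x hx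
  rw [mem_prs] at hx ⊢
  tauto




/-- Independence is monotone under subsets. -/
lemma indep_mono {G : SimpleGraph V} {S T : Set V} (h : S ⊆ T) (hT : IsIndepSet G T) :
    IsIndepSet G S := hT.mono h

section Split

variable (p : V → ℕ) {E R : Finset V} {u : V}

open scoped Classical

lemma prs_part0 (hu : u ∈ E) (j : ℕ) :
    (prs G E R j).filter (fun x => u ∉ x.1 ∧ u ∉ x.2) = prs G (E.erase u) (R.erase u) j := by
  ext x
  simp only [mem_filter, mem_prs]
  constructor
  · rintro ⟨⟨h1, h2, h3, h4, h5, h6⟩, hu1, hu2⟩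
    refine ⟨fun v hv => mem_erase.mpr ⟨?_, h1 hv⟩, fun v hv => mem_erase.mpr ⟨?_, h2 hv⟩,
      fun v hv => mem_erase.mpr ⟨?_, h3 hv⟩, h4, h5, h6⟩
    · rintro rfl; exact hu1 hv
    · rintro rfl; exact hu2 hv
    · rintro rfl; exact hu1 hv
  · rintro ⟨h1, h2, h3, h4, h5, h6⟩
    have e1 : u ∉ x.1 := fun hx => (mem_erase.mp (h1 hx)).1 rfl
    have e2 : u ∉ x.2 := fun hx => (mem_erase.mp (h2 hx)).1 rfl
    exact ⟨⟨fun v hv => mem_of_mem_erase (h1 hv), fun v hv => mem_of_mem_erase (h2 hv),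
      fun v hv => mem_of_mem_erase (h3 hv), h4, h5, h6⟩, e1, e2⟩

/-- The part of the sum where `u` lies in the `B`-component. -/
lemma prs_part2 (f : V → ℕ) (hu : u ∈ E) (j : ℕ) :
    ∑ x ∈ (prs G E R (j+1)).filter (fun x => u ∈ x.2), ∏ v ∈ x.2.erase u, f v
      = sW G f (E.erase u) (R.erase u) j := by
  rw [sW]
  refine Finset.sum_nbij' (fun x => (x.1, x.2.erase u)) (fun y => (y.1, insert u y.2))
    ?_ ?_ ?_ ?_ ?_
  · rintro ⟨A, B⟩ hx
    simp only [mem_filter, mem_prs] at hx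
    obtain ⟨⟨h1, h2, h3, h4, h5, h6⟩, huB⟩ := hx
    have huA : u ∉ A := fun hA => (Finset.disjoint_left.mp h5 hA) huB
    refine mem_prs G |>.mpr ⟨fun v hv => mem_erase.mpr ⟨fun hvu => huA (hvu ▸ hv), h1 hv⟩,
      fun v hv => mem_erase.mpr ⟨(mem_erase.mp hv).1, h2 (mem_of_mem_erase hv)⟩,
      fun v hv => mem_erase.mpr ⟨fun hvu => huA (hvu ▸ hv), h3 hv⟩, h4,
      disjoint_left.mpr (fun {a} ha hae => (Finset.disjoint_left.mp h5 ha) (mem_of_mem_erase hae)),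
      by show #A + #(B.erase u) = j; rw [card_erase_of_mem huB]; have hb1 : 0 < #B := Finset.card_pos.mpr ⟨u, huB⟩; omega⟩
  · rintro ⟨A, B⟩ hy
    simp only [mem_prs] at hy
    obtain ⟨h1, h2, h3, h4, h5, h6⟩ := hy
    have huA : u ∉ A := fun hA => (mem_erase.mp (h1 hA)).1 rfl
    have huB : u ∉ B := fun hB => (mem_erase.mp (h2 hB)).1 rfl
    simp only [mem_filter, mem_prs]
    refine ⟨⟨fun v hv => mem_of_mem_erase (h1 hv), ?_,
      fun v hv => mem_of_mem_erase (h3 hv), h4, ?_, ?_⟩, mem_insert_self u B⟩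
    · intro v hv
      rcases mem_insert.mp hv with rfl | hv
      · exact hu
      · exact mem_of_mem_erase (h2 hv)
    · exact disjoint_left.mpr (fun {a} ha hai => by
        rcases mem_insert.mp hai with rfl | hai
        · exact huA ha
        · exact (Finset.disjoint_left.mp h5 ha) hai)
    · simp [card_insert_of_notMem huB]; omega
  · rintro ⟨A, B⟩ hx
    simp only [mem_filter] at hx
    simp [Finset.insert_erase hx.2]
  · rintro ⟨A, B⟩ hy
    simp only [mem_prs] at hy
    have huB : u ∉ B := fun hB => (mem_erase.mp (hy.2.1 hB)).1 rfl
    simp [Finset.erase_insert huB]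
  · rintro ⟨A, B⟩ hx
    rfl

/-- The part of the sum where `u` lies in the `A`-component (and `u ∈ R`). -/
lemma prs_part1 (f : V → ℕ) (hu : u ∈ E) (huR : u ∈ R) (j : ℕ) :
    ∑ x ∈ (prs G E R (j+1)).filter (fun x => u ∈ x.1), ∏ v ∈ x.2, f v
      = sW G f (E.erase u) ((R.erase u).filter (fun x => ¬ G.Adj u x)) j := by
  rw [sW]
  refine Finset.sum_nbij' (fun x => (x.1.erase u, x.2)) (fun y => (insert u y.1, y.2))
    ?_ ?_ ?_ ?_ ?_
  · rintro ⟨A, B⟩ hx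
    simp only [mem_filter, mem_prs] at hx
    obtain ⟨⟨h1, h2, h3, h4, h5, h6⟩, huA⟩ := hx
    have huB : u ∉ B := fun hB => (Finset.disjoint_left.mp h5 huA) hB
    refine mem_prs G |>.mpr ⟨fun v hv => mem_erase.mpr ⟨(mem_erase.mp hv).1, h1 (mem_of_mem_erase hv)⟩,
      fun v hv => mem_erase.mpr ⟨fun hvu => huB (hvu ▸ hv), h2 hv⟩, ?_,
      indep_mono (by simpa using Finset.erase_subset u A) h4,
      disjoint_left.mpr (fun {a} ha hab => (Finset.disjoint_left.mp h5 (mem_of_mem_erase ha)) hab),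
      by show #(A.erase u) + #B = j; rw [card_erase_of_mem huA]; have hb1 : 0 < #A := Finset.card_pos.mpr ⟨u, huA⟩; omega⟩
    · intro v hv
      have hvA : v ∈ A := mem_of_mem_erase hv
      have hvu : v ≠ u := (mem_erase.mp hv).1
      refine mem_filter.mpr ⟨mem_erase.mpr ⟨hvu, h3 hvA⟩, ?_⟩
      exact h4 (by simpa using huA) (by simpa using hvA) (Ne.symm hvu)
  · rintro ⟨A, B⟩ hy
    simp only [mem_prs] at hy
    obtain ⟨h1, h2, h3, h4, h5, h6⟩ := hy
    have huA : u ∉ A := fun hA => (mem_erase.mp (h1 hA)).1 rfl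
    have huB : u ∉ B := fun hB => (mem_erase.mp (h2 hB)).1 rfl
    simp only [mem_filter, mem_prs]
    refine ⟨⟨?_, fun v hv => mem_of_mem_erase (h2 hv), ?_, ?_, ?_, ?_⟩, mem_insert_self u A⟩
    · intro v hv
      rcases mem_insert.mp hv with rfl | hv
      · exact hu
      · exact mem_of_mem_erase (h1 hv)
    · intro v hv
      rcases mem_insert.mp hv with rfl | hv
      · exact huR
      · exact mem_of_mem_erase (mem_filter.mp (h3 hv)).1
    · have hsym : Symmetric (fun a b : V => ¬ G.Adj a b) := by
        intro a b hab hba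
        exact hab (G.adj_symm hba)
      haveI : Std.Symm (fun a b : V => ¬ G.Adj a b) := ⟨fun a b h => hsym h⟩
      rw [IsIndepSet, Finset.coe_insert, Set.pairwise_insert_of_symmetric]
      refine ⟨h4, fun b hb hub => ?_⟩
      have := (mem_filter.mp (h3 (by simpa using hb))).2
      exact this
    · exact disjoint_left.mpr (fun {a} ha hab => by
        rcases mem_insert.mp ha with rfl | ha
        · exact huB hab
        · exact (Finset.disjoint_left.mp h5 ha) hab)
    · simp [card_insert_of_notMem huA]; omega
  · rintro ⟨A, B⟩ hx
    simp only [mem_filter] at hx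
    simp [Finset.insert_erase hx.2]
  · rintro ⟨A, B⟩ hy
    simp only [mem_prs] at hy
    have huA : u ∉ A := fun hA => (mem_erase.mp (hy.1 hA)).1 rfl
    simp [Finset.erase_insert huA]
  · rintro ⟨A, B⟩ hx
    rfl

lemma prs_part1_empty (huR : u ∉ R) (j : ℕ) :
    (prs G E R j).filter (fun x => u ∈ x.1) = ∅ := by
  rw [Finset.filter_eq_empty_iff]
  intro x hx
  rw [mem_prs] at hx
  exact fun huA => huR (hx.2.2.1 huA)

/-- Expansion of `s` at a vertex `u`. -/
lemma sW_expand (hu : u ∈ E) (j : ℕ) :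
    sW G p E R (j+1) = sW G p (E.erase u) (R.erase u) (j+1)
      + p u * sW G p (E.erase u) (R.erase u) j
      + (if u ∈ R then sW G p (E.erase u) ((R.erase u).filter (fun x => ¬ G.Adj u x)) j
          else 0) := by
  classical
  have hsplit1 := Finset.sum_filter_add_sum_filter_not (prs G E R (j+1))
    (fun x => u ∈ x.1) (fun x => ∏ v ∈ x.2, p v)
  have hsplit2 := Finset.sum_filter_add_sum_filter_not
    ((prs G E R (j+1)).filter (fun x => u ∉ x.1))
    (fun x => u ∈ x.2) (fun x => ∏ v ∈ x.2, p v)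
  -- identify the three pieces
  have e0 : ∑ x ∈ ((prs G E R (j+1)).filter (fun x => u ∉ x.1)).filter (fun x => u ∉ x.2),
      ∏ v ∈ x.2, p v = sW G p (E.erase u) (R.erase u) (j+1) := by
    rw [Finset.filter_filter]
    rw [prs_part0 G hu]
    rfl
  have e2 : ∑ x ∈ ((prs G E R (j+1)).filter (fun x => u ∉ x.1)).filter (fun x => u ∈ x.2),
      ∏ v ∈ x.2, p v = p u * sW G p (E.erase u) (R.erase u) j := by
    have hff : ((prs G E R (j+1)).filter (fun x => u ∉ x.1)).filter (fun x => u ∈ x.2)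
        = (prs G E R (j+1)).filter (fun x => u ∈ x.2) := by
      rw [Finset.filter_filter]
      apply Finset.filter_congr
      intro x hx
      rw [mem_prs] at hx
      constructor
      · tauto
      · intro h2
        exact ⟨fun h1 => (Finset.disjoint_left.mp hx.2.2.2.2.1 h1) h2, h2⟩
    rw [hff]
    rw [← prs_part2 G p hu j, Finset.mul_sum]
    apply Finset.sum_congr rfl
    intro x hx
    have huB : u ∈ x.2 := (Finset.mem_filter.mp hx).2
    rw [← Finset.mul_prod_erase _ _ huB]
  have e1 : ∑ x ∈ (prs G E R (j+1)).filter (fun x => u ∈ x.1), ∏ v ∈ x.2, p v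
      = (if u ∈ R then sW G p (E.erase u) ((R.erase u).filter (fun x => ¬ G.Adj u x)) j
          else 0) := by
    by_cases huR : u ∈ R
    · rw [if_pos huR, prs_part1 G p hu huR j]
    · rw [if_neg huR, prs_part1_empty G huR]
      simp
  rw [sW, ← hsplit1, ← hsplit2, e0, e2, e1]
  ring

end Split


section More

variable (p : V → ℕ) {E R : Finset V} {u : V}

open scoped Classical

/-- Increment identity: raising the weight of `u` by one. -/
lemma sW_update (hu : u ∈ E) {m : ℕ} (hm : p u = m + 1) (j : ℕ) :
    sW G p E R (j+1) = sW G (Function.update p u m) E R (j+1)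
      + sW G (Function.update p u m) (E.erase u) (R.erase u) j := by
  set p' := Function.update p u m with hp'
  have hsplit := Finset.sum_filter_add_sum_filter_not (prs G E R (j+1))
    (fun x => u ∈ x.2) (fun x => ∏ v ∈ x.2, p v)
  have hsplit' := Finset.sum_filter_add_sum_filter_not (prs G E R (j+1))
    (fun x => u ∈ x.2) (fun x => ∏ v ∈ x.2, p' v)
  have ha : ∑ x ∈ (prs G E R (j+1)).filter (fun x => u ∉ x.2), ∏ v ∈ x.2, p v
      = ∑ x ∈ (prs G E R (j+1)).filter (fun x => u ∉ x.2), ∏ v ∈ x.2, p' v := by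
    apply Finset.sum_congr rfl
    intro x hx
    apply Finset.prod_congr rfl
    intro v hv
    have : v ≠ u := fun h => (Finset.mem_filter.mp hx).2 (h ▸ hv)
    simp [hp', Function.update_of_ne this]
  have hb : ∑ x ∈ (prs G E R (j+1)).filter (fun x => u ∈ x.2), ∏ v ∈ x.2, p v
      = (∑ x ∈ (prs G E R (j+1)).filter (fun x => u ∈ x.2), ∏ v ∈ x.2, p' v)
        + ∑ x ∈ (prs G E R (j+1)).filter (fun x => u ∈ x.2), ∏ v ∈ x.2.erase u, p' v := by
    rw [← Finset.sum_add_distrib]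
    apply Finset.sum_congr rfl
    intro x hx
    have huB : u ∈ x.2 := (Finset.mem_filter.mp hx).2
    have hQ : ∏ v ∈ x.2.erase u, p v = ∏ v ∈ x.2.erase u, p' v := by
      apply Finset.prod_congr rfl
      intro v hv
      simp [hp', Function.update_of_ne (Finset.mem_erase.mp hv).1]
    rw [← Finset.mul_prod_erase _ p huB, ← Finset.mul_prod_erase _ p' huB, hQ, hm]
    simp [hp', Function.update_self]
    ring
  have hpart2 := prs_part2 G (R := R) p' hu j
  rw [sW, ← hsplit, hb, ha]
  rw [sW, ← hsplit']
  rw [hpart2]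
  ring

/-- Avoidance double counting. -/
lemma sW_avoid (k : ℕ) :
    ∑ u ∈ E, sW G p (E.erase u) (R.erase u) k = (E.card - k) * sW G p E R k := by
  have step1 : ∀ u ∈ E, sW G p (E.erase u) (R.erase u) k
      = ∑ x ∈ prs G E R k, (if u ∉ x.1 ∧ u ∉ x.2 then ∏ v ∈ x.2, p v else 0) := by
    intro u hu
    rw [sW, ← prs_part0 G hu, Finset.sum_filter]
  rw [Finset.sum_congr rfl step1, Finset.sum_comm]
  rw [sW, Finset.mul_sum]
  apply Finset.sum_congr rfl
  intro x hx
  rw [← Finset.sum_filter, Finset.sum_const, smul_eq_mul]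
  congr 1
  have hx' := (mem_prs G).mp hx
  obtain ⟨h1, h2, -, -, h5, h6⟩ := hx'
  have hfe : E.filter (fun u => u ∉ x.1 ∧ u ∉ x.2) = E \ (x.1 ∪ x.2) := by
    ext a
    simp only [Finset.mem_filter, Finset.mem_sdiff, Finset.mem_union]
    tauto
  rw [hfe, Finset.card_sdiff_of_subset (Finset.union_subset h1 h2),
    Finset.card_union_of_disjoint h5, h6]

/-- Summed expansion identity. -/
lemma sW_sum_expand (j : ℕ) :
    E.card * sW G p E R (j+1)
      = ∑ u ∈ E, (sW G p (E.erase u) (R.erase u) (j+1)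
          + p u * sW G p (E.erase u) (R.erase u) j
          + (if u ∈ R then sW G p (E.erase u)
              ((R.erase u).filter (fun x => ¬ G.Adj u x)) j else 0)) := by
  rw [show ∑ u ∈ E, (sW G p (E.erase u) (R.erase u) (j+1)
          + p u * sW G p (E.erase u) (R.erase u) j
          + (if u ∈ R then sW G p (E.erase u)
              ((R.erase u).filter (fun x => ¬ G.Adj u x)) j else 0))
      = ∑ _u ∈ E, sW G p E R (j+1) from
    Finset.sum_congr rfl (fun u hu => (sW_expand G p hu j).symm)]
  rw [Finset.sum_const, smul_eq_mul]

end More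


section Uniform

variable (p : V → ℕ) {E : Finset V}

open scoped Classical

lemma arith_N1 {q j d : ℕ} (hq : 1 ≤ q) (hcond : (j+2+d)^2 ≤ 4*q*(j+2+d+1)) :
    (q+1)*((j+1)*(d+1)) ≤ q*((j+2)*(d+2)) := by
  have h2ab : 2*(j+1)*(d+1) ≤ (j+1)^2 + (d+1)^2 := by
    nlinarith [sq_nonneg ((j:ℤ)-d), sq_nonneg (j+1), sq_nonneg (d+1)]
  have h4ab : 4*((j+1)*(d+1)) ≤ (j+d+2)^2 := by nlinarith
  have hkey : (j+1)*(d+1) ≤ q*(j+d+3) := by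
    have h' : 4*((j+1)*(d+1)) ≤ 4*(q*(j+d+3)) := by
      calc 4*((j+1)*(d+1)) ≤ (j+d+2)^2 := h4ab
        _ = (j+2+d)^2 := by ring
        _ ≤ 4*q*(j+2+d+1) := hcond
        _ = 4*(q*(j+d+3)) := by ring
    omega
  calc (q+1)*((j+1)*(d+1)) = q*((j+1)*(d+1)) + (j+1)*(d+1) := by ring
    _ ≤ q*((j+1)*(d+1)) + q*(j+d+3) := by omega
    _ = q*((j+2)*(d+2)) := by ring

/-- Uniform-weights upper chain: `(j+2)·s_{j+2} ≤ (q+1)(n-j-1)·s_{j+1}`. -/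
lemma chain_upper {q : ℕ} (hp : ∀ v ∈ E, p v = q) (R : Finset V) {j : ℕ}
    (hn : j + 2 ≤ E.card) :
    (j+2) * sW G p E R (j+2) ≤ (q+1) * ((E.card - (j+2) + 1) * sW G p E R (j+1)) := by
  set n := E.card
  have hid := sW_sum_expand G p (E := E) (R := R) (j+1)
  have havoid2 := sW_avoid G p (E := E) (R := R) (j+2)
  have havoid1 := sW_avoid G p (E := E) (R := R) (j+1)
  -- Σ_u p u * g_u (j+1) = q * (n - (j+1)) * s_{j+1}
  have hmid : ∑ u ∈ E, p u * sW G p (E.erase u) (R.erase u) (j+1)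
      = q * ((n - (j+1)) * sW G p E R (j+1)) := by
    rw [← havoid1, Finset.mul_sum]
    apply Finset.sum_congr rfl
    intro u hu
    rw [hp u hu]
  have hite : ∀ u ∈ E, (if u ∈ R then sW G p (E.erase u)
        ((R.erase u).filter (fun x => ¬ G.Adj u x)) (j+1) else 0)
      ≤ sW G p (E.erase u) (R.erase u) (j+1) := by
    intro u hu
    split_ifs with h
    · exact sW_mono_R G p _ (Finset.filter_subset _ _) _
    · exact Nat.zero_le _
  -- combine
  have hup : n * sW G p E R (j+2)
      ≤ (n - (j+2)) * sW G p E R (j+2)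
        + q * ((n - (j+1)) * sW G p E R (j+1))
        + (n - (j+1)) * sW G p E R (j+1) := by
    have : ∑ u ∈ E, (sW G p (E.erase u) (R.erase u) (j+2)
          + p u * sW G p (E.erase u) (R.erase u) (j+1)
          + (if u ∈ R then sW G p (E.erase u)
              ((R.erase u).filter (fun x => ¬ G.Adj u x)) (j+1) else 0))
        ≤ (∑ u ∈ E, sW G p (E.erase u) (R.erase u) (j+2))
          + (∑ u ∈ E, p u * sW G p (E.erase u) (R.erase u) (j+1))
          + ∑ u ∈ E, sW G p (E.erase u) (R.erase u) (j+1) := by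
      rw [← Finset.sum_add_distrib, ← Finset.sum_add_distrib]
      exact Finset.sum_le_sum (fun u hu => by
        have := hite u hu
        omega)
    calc n * sW G p E R (j+2)
        = ∑ u ∈ E, (sW G p (E.erase u) (R.erase u) (j+2)
          + p u * sW G p (E.erase u) (R.erase u) (j+1)
          + (if u ∈ R then sW G p (E.erase u)
              ((R.erase u).filter (fun x => ¬ G.Adj u x)) (j+1) else 0)) := hid
      _ ≤ _ := this
      _ = (n - (j+2)) * sW G p E R (j+2)
          + q * ((n - (j+1)) * sW G p E R (j+1))
          + (n - (j+1)) * sW G p E R (j+1) := by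
        rw [havoid2, hmid, havoid1]
  have hsub : (n - (j+2)) + (j+2) = n := Nat.sub_add_cancel hn
  have : (n - (j+2)) * sW G p E R (j+2) + (j+2) * sW G p E R (j+2) = n * sW G p E R (j+2) := by
    rw [← Nat.add_mul, hsub]
  have hfin : (j+2) * sW G p E R (j+2)
      ≤ q * ((n - (j+1)) * sW G p E R (j+1)) + (n - (j+1)) * sW G p E R (j+1) := by omega
  have : n - (j+2) + 1 = n - (j+1) := by omega
  rw [this]
  calc (j+2) * sW G p E R (j+2) ≤ _ := hfin
    _ = (q+1) * ((n - (j+1)) * sW G p E R (j+1)) := by ring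

/-- Uniform-weights lower chain: `q(n-j)·s_j ≤ (j+1)·s_{j+1}`. -/
lemma chain_lower {q : ℕ} (hp : ∀ v ∈ E, p v = q) (R : Finset V) {j : ℕ}
    (hn : j + 1 ≤ E.card) :
    q * ((E.card - j) * sW G p E R j) ≤ (j+1) * sW G p E R (j+1) := by
  set n := E.card
  have hid := sW_sum_expand G p (E := E) (R := R) j
  have havoid1 := sW_avoid G p (E := E) (R := R) (j+1)
  have havoid0 := sW_avoid G p (E := E) (R := R) j
  have hmid : ∑ u ∈ E, p u * sW G p (E.erase u) (R.erase u) j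
      = q * ((n - j) * sW G p E R j) := by
    rw [← havoid0, Finset.mul_sum]
    exact Finset.sum_congr rfl (fun u hu => by rw [hp u hu])
  have hlow : (n - (j+1)) * sW G p E R (j+1) + q * ((n - j) * sW G p E R j)
      ≤ n * sW G p E R (j+1) := by
    rw [hid, ← havoid1, ← hmid, ← Finset.sum_add_distrib]
    exact Finset.sum_le_sum (fun u hu => by omega)
  have hsub : (n - (j+1)) + (j+1) = n := Nat.sub_add_cancel hn
  have : (n - (j+1)) * sW G p E R (j+1) + (j+1) * sW G p E R (j+1) = n * sW G p E R (j+1) := by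
    rw [← Nat.add_mul, hsub]
  omega

/-- The ★ inequality in the uniform case. -/
lemma star_uniform {q : ℕ} (hq : 1 ≤ q) (hcond : E.card^2 ≤ 4*q*(E.card+1))
    (hp : ∀ v ∈ E, p v = q) (R₁ R₂ : Finset V) (j : ℕ) :
    sW G p E R₁ (j+2) * sW G p E R₂ j ≤ sW G p E R₁ (j+1) * sW G p E R₂ (j+1) := by
  by_cases hbig : E.card < j + 2
  · rw [sW_eq_zero G p R₁ hbig]
    simp
  push_neg at hbig
  obtain ⟨d, hd⟩ := Nat.le.dest hbig
  have hU1 := chain_upper G p hp R₁ hbig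
  have hU2 := chain_lower G p hp R₂ (j := j) (by omega)
  have hN1 : (q+1)*((j+1)*(d+1)) ≤ q*((j+2)*(d+2)) :=
    arith_N1 hq (by rw [show j+2+d = E.card from hd]; exact hcond)
  have e1 : E.card - (j+2) + 1 = d + 1 := by omega
  have e2 : E.card - j = d + 2 := by omega
  rw [e1] at hU1
  rw [e2] at hU2
  -- multiply the two chains
  have hmul : ((j+2) * sW G p E R₁ (j+2)) * (q * ((d+2) * sW G p E R₂ j))
      ≤ ((q+1) * ((d+1) * sW G p E R₁ (j+1))) * ((j+1) * sW G p E R₂ (j+1)) :=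
    Nat.mul_le_mul hU1 hU2
  have hmul2 : ((q+1) * ((d+1) * sW G p E R₁ (j+1))) * ((j+1) * sW G p E R₂ (j+1))
      ≤ ((j+2) * q * (d+2)) * (sW G p E R₁ (j+1) * sW G p E R₂ (j+1)) := by
    calc ((q+1) * ((d+1) * sW G p E R₁ (j+1))) * ((j+1) * sW G p E R₂ (j+1))
        = ((q+1)*((j+1)*(d+1))) * (sW G p E R₁ (j+1) * sW G p E R₂ (j+1)) := by ring
      _ ≤ (q*((j+2)*(d+2))) * (sW G p E R₁ (j+1) * sW G p E R₂ (j+1)) :=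
          Nat.mul_le_mul_right _ hN1
      _ = ((j+2) * q * (d+2)) * (sW G p E R₁ (j+1) * sW G p E R₂ (j+1)) := by ring
  have hfinal : ((j+2) * q * (d+2)) * (sW G p E R₁ (j+2) * sW G p E R₂ j)
      ≤ ((j+2) * q * (d+2)) * (sW G p E R₁ (j+1) * sW G p E R₂ (j+1)) := by
    calc ((j+2) * q * (d+2)) * (sW G p E R₁ (j+2) * sW G p E R₂ j)
        = ((j+2) * sW G p E R₁ (j+2)) * (q * ((d+2) * sW G p E R₂ j)) := by ring
      _ ≤ _ := hmul
      _ ≤ _ := hmul2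
  have hpos : 0 < (j+2) * q * (d+2) := by positivity
  exact Nat.le_of_mul_le_mul_left hfinal hpos

end Uniform


section Grand

open scoped Classical

lemma arith_N0 {q c : ℕ} (hc : 0 < c) (h : c^2 ≤ 4*q*(c+1)) :
    (c-1)^2 ≤ 4*q*(c-1+1) := by
  obtain ⟨d, rfl⟩ : ∃ d, c = d+1 := ⟨c-1, by omega⟩
  simp only [Nat.add_sub_cancel]
  have key : d^2 * (d+2) ≤ (4*q*(d+1))*(d+2) := by
    calc d^2*(d+2) ≤ (d+1)^2*(d+1) := by nlinarith
      _ ≤ (4*q*((d+1)+1))*(d+1) := Nat.mul_le_mul_right _ h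
      _ = (4*q*(d+1))*(d+2) := by ring
  exact Nat.le_of_mul_le_mul_right key (by omega)

/-- Derived crossing inequality from the ★ package. -/
lemma cross_c2 {p : V → ℕ} {E : Finset V} (hp1 : ∀ v ∈ E, 1 ≤ p v)
    (hstar : ∀ R₁ R₂ j, sW G p E R₁ (j+2) * sW G p E R₂ j
      ≤ sW G p E R₁ (j+1) * sW G p E R₂ (j+1))
    (R₁ R₂ : Finset V) (j : ℕ) :
    sW G p E R₁ (j+3) * sW G p E R₂ j ≤ sW G p E R₁ (j+1) * sW G p E R₂ (j+2) := by
  by_cases hbig : E.card < j+3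
  · rw [sW_eq_zero G p R₁ hbig]
    simp
  push_neg at hbig
  have P1 := hstar R₁ R₂ (j+1)
  have P2 := hstar R₁ R₂ j
  have pos1 : 1 ≤ sW G p E R₁ (j+2) := one_le_sW G p R₁ hp1 (by omega)
  have pos2 : 1 ≤ sW G p E R₂ (j+1) := one_le_sW G p R₂ hp1 (by omega)
  have hc : 0 < sW G p E R₁ (j+2) * sW G p E R₂ (j+1) := by positivity
  refine Nat.le_of_mul_le_mul_left ?_ hc
  calc sW G p E R₁ (j+2) * sW G p E R₂ (j+1) * (sW G p E R₁ (j+3) * sW G p E R₂ j)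
      = (sW G p E R₁ (j+3) * sW G p E R₂ (j+1)) * (sW G p E R₁ (j+2) * sW G p E R₂ j) := by
        ring
    _ ≤ (sW G p E R₁ (j+2) * sW G p E R₂ (j+2)) * (sW G p E R₁ (j+1) * sW G p E R₂ (j+1)) :=
        Nat.mul_le_mul P1 P2
    _ = sW G p E R₁ (j+2) * sW G p E R₂ (j+1) * (sW G p E R₁ (j+1) * sW G p E R₂ (j+2)) := by
        ring

/-- The master theorem: mixed log-concavity of the weighted counts. -/
theorem grand (q : ℕ) (hq : 1 ≤ q) (n : ℕ) :
    ∀ (t : ℕ) (E : Finset V) (p : V → ℕ), E.card ≤ n → (∑ v ∈ E, p v) ≤ t →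
      (∀ v ∈ E, q ≤ p v) → E.card^2 ≤ 4*q*(E.card+1) →
      ∀ R₁ R₂ j, sW G p E R₁ (j+2) * sW G p E R₂ j
        ≤ sW G p E R₁ (j+1) * sW G p E R₂ (j+1) := by
  induction n with
  | zero =>
    intro t E p hE _ _ _ R₁ R₂ j
    rw [sW_eq_zero G p R₁ (by omega : E.card < j+2)]
    simp
  | succ n ihn =>
    intro t
    induction t with
    | zero =>
      intro E p hE hsum hw _ R₁ R₂ j
      have hE0 : E.card = 0 := by
        by_contra h
        obtain ⟨v, hv⟩ := Finset.card_pos.mp (Nat.pos_of_ne_zero h)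
        have h1 : p v ≤ ∑ x ∈ E, p x :=
          Finset.single_le_sum (fun i _ => Nat.zero_le (p i)) hv
        have h2 := hw v hv
        omega
      rw [sW_eq_zero G p R₁ (by omega : E.card < j+2)]
      simp
    | succ t iht =>
      intro E p hE hsum hw hcond R₁ R₂ j
      by_cases hex : ∃ u ∈ E, q + 1 ≤ p u
      case neg =>
        push_neg at hex
        have huni : ∀ v ∈ E, p v = q := fun v hv =>
          le_antisymm (by have := hex v hv; omega) (hw v hv)
        exact star_uniform G p hq hcond huni R₁ R₂ j
      case pos =>
        obtain ⟨u, huE, hpu⟩ := hex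
        set m := p u - 1 with hm
        set p' := Function.update p u m with hp'def
        have hp'u : p' u = m := Function.update_self u m p
        have hp'v : ∀ v, v ≠ u → p' v = p v := fun v hv => Function.update_of_ne hv m p
        have hw' : ∀ v ∈ E, q ≤ p' v := by
          intro v hv
          by_cases hvu : v = u
          · subst hvu; rw [hp'u]; omega
          · rw [hp'v v hvu]; exact hw v hv
        have hw'1 : ∀ v ∈ E.erase u, q ≤ p' v :=
          fun v hv => hw' v (Finset.mem_of_mem_erase hv)
        have hw'11 : ∀ v ∈ E.erase u, 1 ≤ p' v := fun v hv => le_trans hq (hw'1 v hv)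
        have hsum' : (∑ v ∈ E, p' v) ≤ t := by
          have h1 : ∑ v ∈ E, p' v = m + ∑ v ∈ E \ {u}, p v :=
            Finset.sum_update_of_mem huE p m
          have h2 : ∑ v ∈ E, p v = p u + ∑ v ∈ E \ {u}, p v := by
            conv_lhs => rw [show p = Function.update p u (p u) from
              (Function.update_eq_self u p).symm]
            exact Finset.sum_update_of_mem huE p (p u)
          omega
        have Hs : ∀ R₁ R₂ j, sW G p' E R₁ (j+2) * sW G p' E R₂ j
            ≤ sW G p' E R₁ (j+1) * sW G p' E R₂ (j+1) :=
          fun R₁ R₂ j => iht E p' hE hsum' hw' hcond R₁ R₂ j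
        have hcard' : (E.erase u).card ≤ n := by
          rw [Finset.card_erase_of_mem huE]
          have := Finset.card_pos.mpr ⟨u, huE⟩
          omega
        have hcond' : (E.erase u).card^2 ≤ 4*q*((E.erase u).card + 1) := by
          rw [Finset.card_erase_of_mem huE]
          exact arith_N0 (Finset.card_pos.mpr ⟨u, huE⟩) hcond
        have Ho : ∀ R₁ R₂ j, sW G p' (E.erase u) R₁ (j+2) * sW G p' (E.erase u) R₂ j
            ≤ sW G p' (E.erase u) R₁ (j+1) * sW G p' (E.erase u) R₂ (j+1) :=
          fun R₁ R₂ j => ihn _ (E.erase u) p' hcard' (le_refl _) hw'1 hcond' R₁ R₂ j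
        have Hc2 := cross_c2 G hw'11 Ho
        have hupd : ∀ (R : Finset V) (i : ℕ), sW G p E R (i+1)
            = sW G p' E R (i+1) + sW G p' (E.erase u) (R.erase u) i :=
          fun R i => sW_update G p huE (by omega : p u = m + 1) i
        rcases j with _ | l
        · -- j = 0
          rw [sW_zero G p E R₂, mul_one]
          rw [show (2 : ℕ) = 1 + 1 from rfl, hupd R₁ 1, hupd R₁ 0, hupd R₂ 0]
          have hy0 : sW G p' (E.erase u) (R₂.erase u) 0 = 1 := sW_zero G p' _ _
          rw [hy0]
          have h1 : sW G p' E R₁ (1+1) ≤ sW G p' E R₁ 1 * sW G p' E R₂ 1 := by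
            have h := Hs R₁ R₂ 0
            rw [sW_zero G p' E R₂, mul_one] at h
            exact h
          have h2 : sW G p' (E.erase u) (R₁.erase u) 1 ≤ sW G p' E R₁ 1 := by
            rw [show (1:ℕ) = 0 + 1 from rfl, sW_expand G p' huE 0]
            split_ifs <;> omega
          nlinarith [h1, h2]
        · -- j = l + 1
          rw [show l+1+2 = (l+2)+1 from rfl, hupd R₁ (l+2), hupd R₂ l,
            show l+1+1 = (l+1)+1 from rfl, hupd R₁ (l+1), hupd R₂ (l+1)]
          set a3 := sW G p' E R₁ (l+2+1) with ha3
          set a2 := sW G p' E R₁ (l+1+1) with ha2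
          set b1 := sW G p' E R₂ (l+1) with hb1
          set b2 := sW G p' E R₂ (l+1+1) with hb2
          set x3 := sW G p' (E.erase u) (R₁.erase u) (l+3) with hx3
          set x2 := sW G p' (E.erase u) (R₁.erase u) (l+2) with hx2
          set x1 := sW G p' (E.erase u) (R₁.erase u) (l+1) with hx1
          set y0 := sW G p' (E.erase u) (R₂.erase u) l with hy0
          set y1 := sW G p' (E.erase u) (R₂.erase u) (l+1) with hy1
          set y2 := sW G p' (E.erase u) (R₂.erase u) (l+2) with hy2
          set w2 := sW G p' (E.erase u)
            ((R₁.erase u).filter (fun x => ¬ G.Adj u x)) (l+2) with hw2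
          set w1 := sW G p' (E.erase u)
            ((R₁.erase u).filter (fun x => ¬ G.Adj u x)) (l+1) with hv1
          set v0 := sW G p' (E.erase u)
            ((R₂.erase u).filter (fun x => ¬ G.Adj u x)) l with hvv0
          set v1 := sW G p' (E.erase u)
            ((R₂.erase u).filter (fun x => ¬ G.Adj u x)) (l+1) with hvv1
          have T1 : a3 * b1 ≤ a2 * b2 := Hs R₁ R₂ (l+1)
          have T4 : x2 * y0 ≤ x1 * y1 := Ho (R₁.erase u) (R₂.erase u) l
          have T23 : a3 * y0 + x2 * b1 ≤ a2 * y1 + x1 * b2 := by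
            have e1 : a3 = x3 + p' u * x2
                + (if u ∈ R₁ then w2 else 0) := by
              rw [ha3, hx3, hx2, hw2, show l+3 = (l+2)+1 from rfl]
              exact sW_expand G p' huE (l+2)
            have e2 : a2 = x2 + p' u * x1
                + (if u ∈ R₁ then w1 else 0) := by
              rw [ha2, hx2, hx1, hv1]
              exact sW_expand G p' huE (l+1)
            have e3 : b1 = y1 + p' u * y0
                + (if u ∈ R₂ then v0 else 0) := by
              rw [hb1, hy1, hy0, hvv0, show l+1 = l+1 from rfl]
              exact sW_expand G p' huE l
            have e4 : b2 = y2 + p' u * y1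
                + (if u ∈ R₂ then v1 else 0) := by
              rw [hb2, hy2, hy1, hvv1]
              exact sW_expand G p' huE (l+1)
            have C1 : x3 * y0 ≤ x1 * y2 := Hc2 (R₁.erase u) (R₂.erase u) l
            have C3 : w2 * y0 ≤ w1 * y1 :=
              Ho ((R₁.erase u).filter (fun x => ¬ G.Adj u x)) (R₂.erase u) l
            have C4 : x2 * v0 ≤ x1 * v1 :=
              Ho (R₁.erase u) ((R₂.erase u).filter (fun x => ¬ G.Adj u x)) l
            have D2 : p' u * (x2 * y0) ≤ p' u * (x1 * y1) := mul_le_mul_right T4 (p' u)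
            have C3' : (if u ∈ R₁ then w2 else 0) * y0 ≤ (if u ∈ R₁ then w1 else 0) * y1 := by
              split_ifs
              · exact C3
              · simp
            have C4' : x2 * (if u ∈ R₂ then v0 else 0) ≤ x1 * (if u ∈ R₂ then v1 else 0) := by
              split_ifs
              · exact C4
              · simp
            rw [e1, e2, e3, e4]
            calc (x3 + p' u * x2 + (if u ∈ R₁ then w2 else 0)) * y0
                  + x2 * (y1 + p' u * y0 + (if u ∈ R₂ then v0 else 0))
                = (x3*y0 + p' u * (x2*y0) + (if u ∈ R₁ then w2 else 0)*y0)
                  + (x2*y1 + p' u * (x2*y0) + x2*(if u ∈ R₂ then v0 else 0)) := by ring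
              _ ≤ (x1*y2 + p' u * (x1*y1) + (if u ∈ R₁ then w1 else 0)*y1)
                  + (x2*y1 + p' u * (x1*y1) + x1*(if u ∈ R₂ then v1 else 0)) :=
                  Nat.add_le_add (Nat.add_le_add (Nat.add_le_add C1 D2) C3')
                    (Nat.add_le_add (Nat.add_le_add le_rfl D2) C4')
              _ = (x2 + p' u * x1 + (if u ∈ R₁ then w1 else 0)) * y1
                  + x1 * (y2 + p' u * y1 + (if u ∈ R₂ then v1 else 0)) := by ring
          calc (a3 + x2) * (b1 + y0) = a3 * b1 + (a3 * y0 + x2 * b1) + x2 * y0 := by ring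
            _ ≤ a2 * b2 + (a2 * y1 + x1 * b2) + x1 * y1 :=
              Nat.add_le_add (Nat.add_le_add T1 T23) T4
            _ = (a2 + x1) * (b2 + y1) := by ring

end Grand

end Core

section Bridge

variable [Fintype V] [DecidableEq V] (G : SimpleGraph V) (p : V → ℕ)

open Finset
open scoped Classical

lemma corona_adj_inl_inl {u v : V} :
    (cliqueCorona G p).Adj (Sum.inl u) (Sum.inl v) ↔ G.Adj u v := by
  rw [cliqueCorona, SimpleGraph.fromRel_adj]
  constructor
  · rintro ⟨hne, h | h⟩
    · exact h
    · exact G.adj_symm h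
  · intro h
    exact ⟨by simpa using G.ne_of_adj h, Or.inl h⟩

lemma corona_adj_inl_inr {u v : V} {i : Fin (p v)} :
    (cliqueCorona G p).Adj (Sum.inl u) (Sum.inr ⟨v, i⟩) ↔ u = v := by
  rw [cliqueCorona, SimpleGraph.fromRel_adj]
  constructor
  · rintro ⟨hne, h | h⟩
    · exact h
    · exact h.elim
  · intro h
    exact ⟨by simp, Or.inl h⟩

lemma corona_adj_inr_inr {u v : V} {i : Fin (p u)} {j : Fin (p v)} :
    (cliqueCorona G p).Adj (Sum.inr ⟨u, i⟩) (Sum.inr ⟨v, j⟩)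
      ↔ u = v ∧ (⟨u, i⟩ : Σ v : V, Fin (p v)) ≠ ⟨v, j⟩ := by
  rw [cliqueCorona, SimpleGraph.fromRel_adj]
  constructor
  · rintro ⟨hne, h | h⟩
    · exact ⟨h, fun hh => hne (by rw [hh])⟩
    · exact ⟨h.symm, fun hh => hne (by rw [hh])⟩
  · rintro ⟨rfl, hne⟩
    exact ⟨fun hh => hne (by simpa using hh), Or.inl rfl⟩

/-- Encoding of a pair `(A, B)` with clique choices as an independent set of the corona. -/
noncomputable def encF (A B : Finset V) (g : ∀ a ∈ B, Fin (p a)) :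
    Finset (V ⊕ Σ v : V, Fin (p v)) :=
  A.image Sum.inl ∪ B.attach.image (fun v => Sum.inr ⟨v.1, g v.1 v.2⟩)

lemma mem_encF_inl {A B : Finset V} {g : ∀ a ∈ B, Fin (p a)} {w : V} :
    Sum.inl w ∈ encF p A B g ↔ w ∈ A := by
  simp [encF]

lemma mem_encF_inr {A B : Finset V} {g : ∀ a ∈ B, Fin (p a)} {w : V} {i : Fin (p w)} :
    Sum.inr ⟨w, i⟩ ∈ encF p A B g ↔ ∃ h : w ∈ B, g w h = i := by
  constructor
  · intro hmem
    rcases Finset.mem_union.mp hmem with h | h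
    · exfalso
      obtain ⟨a, -, ha⟩ := Finset.mem_image.mp h
      exact Sum.inl_ne_inr ha
    · obtain ⟨v, -, hv⟩ := Finset.mem_image.mp h
      have hsig : (⟨v.1, g v.1 v.2⟩ : Σ v : V, Fin (p v)) = ⟨w, i⟩ := by
        injection hv
      obtain ⟨h1, h2⟩ := Sigma.mk.inj_iff.mp hsig
      subst h1
      exact ⟨v.2, eq_of_heq h2⟩
  · rintro ⟨h, rfl⟩
    apply Finset.mem_union_right
    exact Finset.mem_image.mpr ⟨⟨w, h⟩, Finset.mem_attach _ _, rfl⟩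

lemma card_encF (A B : Finset V) (g : ∀ a ∈ B, Fin (p a)) :
    (encF p A B g).card = A.card + B.card := by
  rw [encF, Finset.card_union_of_disjoint, Finset.card_image_of_injective _ Sum.inl_injective,
    Finset.card_image_of_injective, Finset.card_attach]
  · intro v₁ v₂ h
    have hsig : (⟨v₁.1, g v₁.1 v₁.2⟩ : Σ v : V, Fin (p v)) = ⟨v₂.1, g v₂.1 v₂.2⟩ := by
      injection h
    exact Subtype.ext (Sigma.mk.inj_iff.mp hsig).1
  · rw [Finset.disjoint_left]
    intro a ha hb
    obtain ⟨w, -, rfl⟩ := Finset.mem_image.mp ha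
    obtain ⟨v, -, hv⟩ := Finset.mem_image.mp hb
    exact Sum.inl_ne_inr hv.symm

lemma indep_encF {A B : Finset V} (hA : IsIndepSet G (A : Set V)) (hd : Disjoint A B)
    (g : ∀ a ∈ B, Fin (p a)) :
    IsIndepSet (cliqueCorona G p) ((encF p A B g : Finset _) : Set (V ⊕ Σ v : V, Fin (p v))) := by
  intro a ha b hb hab
  simp only [Finset.mem_coe] at ha hb
  rcases a with w₁ | ⟨w₁, i₁⟩ <;> rcases b with w₂ | ⟨w₂, i₂⟩
  · rw [mem_encF_inl] at ha hb
    rw [corona_adj_inl_inl]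
    exact hA (by simpa using ha) (by simpa using hb) (by simpa using hab)
  · rw [mem_encF_inl] at ha
    rw [mem_encF_inr] at hb
    rw [corona_adj_inl_inr]
    rintro rfl
    exact (Finset.disjoint_left.mp hd ha) hb.1
  · rw [mem_encF_inr] at ha
    rw [mem_encF_inl] at hb
    intro hadj
    have := ((cliqueCorona G p).adj_symm hadj)
    rw [corona_adj_inl_inr] at this
    subst this
    exact (Finset.disjoint_left.mp hd hb) ha.1
  · rw [mem_encF_inr] at ha hb
    rw [corona_adj_inr_inr]
    rintro ⟨rfl, hne⟩
    obtain ⟨h1, e1⟩ := ha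
    obtain ⟨h2, e2⟩ := hb
    apply hne
    rw [← e1, ← e2]

/-- Decoding: the `A`-part of an independent set of the corona. -/
noncomputable def dA (F : Finset (V ⊕ Σ v : V, Fin (p v))) : Finset V :=
  Finset.univ.filter (fun v => Sum.inl v ∈ F)

/-- Decoding: the `B`-part. -/
noncomputable def dB (F : Finset (V ⊕ Σ v : V, Fin (p v))) : Finset V :=
  Finset.univ.filter (fun v => ∃ i : Fin (p v), Sum.inr ⟨v, i⟩ ∈ F)

/-- Decoding: the chosen clique vertices (total version). -/
noncomputable def dg (hp : ∀ v, 1 ≤ p v) (F : Finset (V ⊕ Σ v : V, Fin (p v))) (v : V) :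
    Fin (p v) :=
  if h : ∃ i : Fin (p v), Sum.inr ⟨v, i⟩ ∈ F then Classical.choose h else ⟨0, hp v⟩

lemma unique_inr {F : Finset (V ⊕ Σ v : V, Fin (p v))}
    (hind : IsIndepSet (cliqueCorona G p) (F : Set _)) {v : V} {i i' : Fin (p v)}
    (h1 : Sum.inr ⟨v, i⟩ ∈ F) (h2 : Sum.inr ⟨v, i'⟩ ∈ F) : i = i' := by
  by_contra hne
  have hsne : (⟨v, i⟩ : Σ v : V, Fin (p v)) ≠ ⟨v, i'⟩ := by
    intro h
    exact hne (by simpa using h)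
  have := hind (by simpa using h1) (by simpa using h2) (fun h => hsne (by injection h))
  exact this (corona_adj_inr_inr G p |>.mpr ⟨rfl, hsne⟩)

lemma dg_spec (hp : ∀ v, 1 ≤ p v) {F : Finset (V ⊕ Σ v : V, Fin (p v))} {v : V}
    (hv : v ∈ dB p F) : Sum.inr ⟨v, dg p hp F v⟩ ∈ F := by
  have h : ∃ i : Fin (p v), Sum.inr ⟨v, i⟩ ∈ F := (Finset.mem_filter.mp hv).2
  rw [dg, dif_pos h]
  exact Classical.choose_spec h

lemma dg_eq (hp : ∀ v, 1 ≤ p v) {F : Finset (V ⊕ Σ v : V, Fin (p v))}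
    (hind : IsIndepSet (cliqueCorona G p) (F : Set _)) {v : V} {i : Fin (p v)}
    (hmem : Sum.inr ⟨v, i⟩ ∈ F) : dg p hp F v = i := by
  have h : ∃ i : Fin (p v), Sum.inr ⟨v, i⟩ ∈ F := ⟨i, hmem⟩
  rw [dg, dif_pos h]
  exact unique_inr G p hind (Classical.choose_spec h) hmem

lemma decode_eq (hp : ∀ v, 1 ≤ p v) {F : Finset (V ⊕ Σ v : V, Fin (p v))}
    (hind : IsIndepSet (cliqueCorona G p) (F : Set _)) :
    F = encF p (dA p F) (dB p F) (fun v _ => dg p hp F v) := by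
  ext t
  rcases t with w | ⟨w, i⟩
  · rw [mem_encF_inl, dA, Finset.mem_filter]
    simp
  · rw [mem_encF_inr]
    constructor
    · intro hmem
      have hw : w ∈ dB p F := Finset.mem_filter.mpr ⟨Finset.mem_univ _, ⟨i, hmem⟩⟩
      exact ⟨hw, dg_eq G p hp hind hmem⟩
    · rintro ⟨h, rfl⟩
      exact dg_spec p hp h

lemma dA_encF (A B : Finset V) (g : ∀ a ∈ B, Fin (p a)) : dA p (encF p A B g) = A := by
  ext v
  rw [dA, Finset.mem_filter, mem_encF_inl]
  simp

lemma dB_encF (A B : Finset V) (g : ∀ a ∈ B, Fin (p a)) : dB p (encF p A B g) = B := by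
  ext v
  rw [dB, Finset.mem_filter]
  simp only [Finset.mem_univ, true_and]
  constructor
  · rintro ⟨i, hi⟩
    exact ((mem_encF_inr p).mp hi).1
  · intro hv
    exact ⟨g v hv, (mem_encF_inr p).mpr ⟨hv, rfl⟩⟩

end Bridge


section Count

variable [Fintype V] [DecidableEq V] (G : SimpleGraph V) (p : V → ℕ)

open Finset
open scoped Classical

lemma step1 (k : ℕ) :
    {S : Set (V ⊕ Σ v : V, Fin (p v)) | IsIndepSet (cliqueCorona G p) S ∧ S.ncard = k}.ncard
      = #(Finset.univ.filter (fun F : Finset (V ⊕ Σ v : V, Fin (p v)) =>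
          IsIndepSet (cliqueCorona G p) (F : Set _) ∧ F.card = k)) := by
  classical
  set P : Set (V ⊕ Σ v : V, Fin (p v)) → Prop :=
    fun S => IsIndepSet (cliqueCorona G p) S ∧ S.ncard = k with hP
  have e : {F : Finset (V ⊕ Σ v : V, Fin (p v)) // P ↑F ∧ True} ≃ {S // P S} := by
    refine Equiv.subtypeEquiv Fintype.finsetEquivSet (fun F => ?_)
    have hF : (Fintype.finsetEquivSet F : Set (V ⊕ Σ v : V, Fin (p v))) = ↑F := by
      simp [Fintype.finsetEquivSet]
    rw [hF]
    tauto
  have h1 : {S : Set (V ⊕ Σ v : V, Fin (p v)) | P S}.ncard = Nat.card {S // P S} :=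
    (Nat.card_coe_set_eq _).symm
  have h2 : Nat.card {S // P S} = Nat.card {F : Finset (V ⊕ Σ v : V, Fin (p v)) // P ↑F ∧ True} :=
    (Nat.card_congr e).symm
  have h3 : Nat.card {F : Finset (V ⊕ Σ v : V, Fin (p v)) // P ↑F ∧ True}
      = #(Finset.univ.filter (fun F : Finset (V ⊕ Σ v : V, Fin (p v)) => P ↑F ∧ True)) := by
    rw [Nat.card_eq_fintype_card, Fintype.card_subtype]
  have h4 : #(Finset.univ.filter (fun F : Finset (V ⊕ Σ v : V, Fin (p v)) => P ↑F ∧ True))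
      = #(Finset.univ.filter (fun F : Finset (V ⊕ Σ v : V, Fin (p v)) => P ↑F)) := by
    congr 1
    apply Finset.filter_congr
    intro F _
    tauto
  rw [show {S : Set (V ⊕ Σ v : V, Fin (p v)) | IsIndepSet (cliqueCorona G p) S ∧ S.ncard = k}
    = {S | P S} from rfl, h1, h2, h3, h4]
  congr 1
  apply Finset.filter_congr
  intro F _
  simp [hP, Set.ncard_coe_finset]

theorem indepCount_corona (hp : ∀ v, 1 ≤ p v) (k : ℕ) :
    indepCount (cliqueCorona G p) k = sW G p Finset.univ Finset.univ k := by
  classical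
  rw [indepCount, step1 G p k]
  have hmap : ∀ F ∈ Finset.univ.filter (fun F : Finset (V ⊕ Σ v : V, Fin (p v)) =>
      IsIndepSet (cliqueCorona G p) (F : Set _) ∧ F.card = k),
      (dA p F, dB p F) ∈ prs G Finset.univ Finset.univ k := by
    intro F hF
    obtain ⟨-, hind, hcard⟩ := Finset.mem_filter.mp hF
    rw [mem_prs]
    refine ⟨Finset.subset_univ _, Finset.subset_univ _, Finset.subset_univ _, ?_, ?_, ?_⟩
    · -- independence of dA
      intro a ha b hb hne
      have haF : Sum.inl a ∈ F := (Finset.mem_filter.mp (Finset.mem_coe.mp ha)).2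
      have hbF : Sum.inl b ∈ F := (Finset.mem_filter.mp (Finset.mem_coe.mp hb)).2
      intro hadj
      exact hind (by simpa using haF) (by simpa using hbF)
        (by simpa using hne) ((corona_adj_inl_inl G p).mpr hadj)
    · -- disjointness
      rw [Finset.disjoint_left]
      intro v hvA hvB
      have h1 : Sum.inl v ∈ F := (Finset.mem_filter.mp hvA).2
      obtain ⟨i, h2⟩ := (Finset.mem_filter.mp hvB).2
      exact hind (by simpa using h1) (by simpa using h2) (by simp)
        ((corona_adj_inl_inr G p).mpr rfl)
    · -- cardinality
      have := decode_eq G p hp hind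
      have hc : F.card = (dA p F).card + (dB p F).card := by
        conv_lhs => rw [this]
        exact card_encF p _ _ _
      show (dA p F).card + (dB p F).card = k
      omega
  rw [Finset.card_eq_sum_card_fiberwise hmap, sW]
  apply Finset.sum_congr rfl
  intro x hx
  obtain ⟨-, -, -, hxind, hxdisj, hxcard⟩ := (mem_prs G).mp hx
  have hfib : #(Finset.filter (fun F => (dA p F, dB p F) = x)
        (Finset.univ.filter (fun F : Finset (V ⊕ Σ v : V, Fin (p v)) =>
          IsIndepSet (cliqueCorona G p) (F : Set _) ∧ F.card = k)))
      = #(x.2.pi (fun v => (Finset.univ : Finset (Fin (p v))))) := by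
    apply Finset.card_bij' (fun F _ => fun v _ => dg p hp F v)
      (fun g _ => encF p x.1 x.2 g)
    · intro F hF
      exact Finset.mem_pi.mpr (fun v hv => Finset.mem_univ _)
    · intro g hg
      have hindE := indep_encF G p hxind hxdisj g
      refine Finset.mem_filter.mpr ⟨Finset.mem_filter.mpr ⟨Finset.mem_univ _, hindE, ?_⟩, ?_⟩
      · rw [card_encF]
        exact hxcard
      · exact Prod.ext (dA_encF p x.1 x.2 g) (dB_encF p x.1 x.2 g)
    · intro F hF
      obtain ⟨hF1, hFx⟩ := Finset.mem_filter.mp hF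
      obtain ⟨-, hind, hcard⟩ := Finset.mem_filter.mp hF1
      have hA : dA p F = x.1 := by rw [← hFx]
      have hB : dB p F = x.2 := by rw [← hFx]
      have hdec := decode_eq G p hp hind
      rw [hA, hB] at hdec
      exact hdec.symm
    · intro g hg
      funext v hv
      have hmem : Sum.inr ⟨v, g v hv⟩ ∈ encF p x.1 x.2 g :=
        (mem_encF_inr p).mpr ⟨hv, rfl⟩
      have hindE := indep_encF G p hxind hxdisj g
      exact dg_eq G p hp hindE hmem
  rw [hfib, Finset.card_pi]
  apply Finset.prod_congr rfl
  intro v _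
  simp

end Count


/-- For a finite graph `G`, a family `𝓗 = {K_{p v} : v ∈ V(G)}` with
`p v ≥ 1`, and `p := min_{v} p v ≥ n(G)²/(4(n(G)+1))`, the independence polynomial
of the clique corona `G∘𝓗` is log-concave. -/
theorem corona_family_logConcave {V : Type*} [Finite V] (G : SimpleGraph V)
    (p : V → ℕ) (hp : ∀ v, 1 ≤ p v)
    (h : ((Nat.card V : ℝ)) ^ 2 / (4 * ((Nat.card V : ℝ) + 1)) ≤ ((sInf (Set.range p) : ℕ) : ℝ)) :
    IndepLogConcave (cliqueCorona G p) := by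
  classical
  cases nonempty_fintype V
  intro k hk1 _
  obtain ⟨k', rfl⟩ : ∃ k', k = k' + 1 := ⟨k - 1, by omega⟩
  have e1 : k' + 1 - 1 = k' := by omega
  rw [e1, indepCount_corona G p hp, indepCount_corona G p hp, indepCount_corona G p hp]
  by_cases hV : Nonempty V
  case neg =>
    have hcard0 : (Finset.univ : Finset V).card = 0 := by
      simp only [Finset.card_univ]
      exact Fintype.card_eq_zero_iff.mpr (by exact ⟨fun v => hV ⟨v⟩⟩)
    rw [sW_eq_zero G p _ (show (Finset.univ : Finset V).card < k' + 1 + 1 by omega)]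
    simp
  case pos =>
    set q := sInf (Set.range p) with hqdef
    obtain ⟨v₀, hv₀⟩ := Nat.sInf_mem (Set.range_nonempty p)
    have hq1 : 1 ≤ q := by rw [hqdef, ← hv₀]; exact hp v₀
    have hple : ∀ v ∈ (Finset.univ : Finset V), q ≤ p v :=
      fun v _ => Nat.sInf_le ⟨v, rfl⟩
    have hnc : Nat.card V = (Finset.univ : Finset V).card := by
      rw [Nat.card_eq_fintype_card, Finset.card_univ]
    have hcond : ((Finset.univ : Finset V).card)^2
        ≤ 4*q*((Finset.univ : Finset V).card + 1) := by
      have h4 : (0:ℝ) < 4*((Nat.card V : ℝ)+1) := by positivity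
      have hr : ((Nat.card V : ℝ))^2 ≤ (q : ℝ) * (4*((Nat.card V : ℝ)+1)) :=
        (div_le_iff₀ h4).mp h
      have hn : (Nat.card V)^2 ≤ q * (4*(Nat.card V + 1)) := by exact_mod_cast hr
      calc ((Finset.univ : Finset V).card)^2 = (Nat.card V)^2 := by rw [hnc]
        _ ≤ q * (4*(Nat.card V + 1)) := hn
        _ = 4*q*(Nat.card V + 1) := by ring
        _ = 4*q*((Finset.univ : Finset V).card + 1) := by rw [hnc]
    have hineq := grand G q hq1 (Finset.univ : Finset V).card (∑ v ∈ Finset.univ, p v)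
      Finset.univ p le_rfl le_rfl hple hcond Finset.univ Finset.univ k'
    calc sW G p Finset.univ Finset.univ k' * sW G p Finset.univ Finset.univ (k'+1+1)
        = sW G p Finset.univ Finset.univ (k'+2) * sW G p Finset.univ Finset.univ k' := by
          ring
      _ ≤ sW G p Finset.univ Finset.univ (k'+1) * sW G p Finset.univ Finset.univ (k'+1) :=
          hineq
      _ = sW G p Finset.univ Finset.univ (k'+1) ^ 2 := (sq _).symm


end WpGraphs
end
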